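/- arXiv:1005.2487 — 2 statements merged into one kernel-verified Lean document; each statement's English description precedes it below -/
import Mathlib

section
/- Let v : ℝ → ℝ ∪ {+∞} be proper, convex, lower semicontinuous, nonincreasing, with v(0) = 0 and -1 ∈ ∂v(0). For p ∈ [1,∞], the function ρ_v(X) = inf_{λ ∈ ℝ} [λ + 𝔼(v(X + λ))] on Lᵖ is convex and monotone (X ≥ Y a.e. implies ρ_v(X) ≤ ρ_v(Y)). -/
open MeasureTheory
open scoped ENNReal

/-- The positive part of an extended real, as an `ℝ≥0∞`. -/
noncomputable def epos (a : EReal) : ENNReal := if a = ⊤ then ⊤ else ENNReal.ofReal a.toReal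

/-- Expectation of an `EReal`-valued random variable (`+∞` as soon as the
positive part has infinite integral, in particular if `Y = +∞` on a set of
positive measure). -/
noncomputable def expE {Ω : Type*} [MeasurableSpace Ω] (μ : Measure Ω) (Y : Ω → EReal) : EReal :=
  ((∫⁻ ω, epos (Y ω) ∂μ : ENNReal) : EReal) - ((∫⁻ ω, epos (-(Y ω)) ∂μ : ENNReal) : EReal)

/-- Convexity for an `EReal`-valued function on `ℝ`. -/
def ERealConvexOn (v : ℝ → EReal) : Prop :=
  ∀ x y a b : ℝ, 0 ≤ a → 0 ≤ b → a + b = 1 →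
    v (a * x + b * y) ≤ (a : EReal) * v x + (b : EReal) * v y

/-- The OCE-type risk measure `ρ_v(X) = inf_{λ ∈ ℝ} [λ + 𝔼(v(X + λ))]`. -/
noncomputable def rho {Ω : Type*} [MeasurableSpace Ω] (μ : Measure Ω) (v : ℝ → EReal)
    (X : Ω → ℝ) : EReal :=
  ⨅ l : ℝ, ((l : EReal) + expE μ (fun ω => v (X ω + l)))

lemma epos_coe (x : ℝ) : epos (x : EReal) = ENNReal.ofReal x := by simp [epos]
lemma epos_bot : epos ⊥ = 0 := by simp [epos]
lemma epos_ne_top {x : EReal} (hx : x ≠ ⊤) : epos x ≠ ⊤ := by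
  simp [epos, if_neg hx]

lemma epos_mono {a b : EReal} (h : a ≤ b) : epos a ≤ epos b := by
  by_cases hb : b = ⊤
  · simp [epos, hb]
  · have ha : a ≠ ⊤ := fun h' => hb (top_le_iff.mp (h' ▸ h))
    simp only [epos, if_neg ha, if_neg hb]
    by_cases ha' : a = ⊥
    · simp [ha']
    · exact ENNReal.ofReal_le_ofReal (EReal.toReal_le_toReal h ha' hb)

lemma coe_ennreal_fin {x : ENNReal} (hx : x ≠ ⊤) : (x : EReal) = ((x.toReal : ℝ) : EReal) := by
  conv_lhs => rw [← ENNReal.ofReal_toReal hx]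
  rw [EReal.coe_ennreal_ofReal, max_eq_left ENNReal.toReal_nonneg]

lemma measurable_epos : Measurable epos := by
  unfold epos
  have hs : MeasurableSet {a : EReal | a = ⊤} := by
    simp only [Set.setOf_eq_eq_singleton]; exact measurableSet_singleton (⊤ : EReal)
  exact Measurable.ite hs measurable_const
    (ENNReal.measurable_ofReal.comp measurable_ereal_toReal)

lemma mul_ne_bot' {b : ℝ} (hb : 0 < b) {n : EReal} (hn : n ≠ ⊥) : (b : EReal) * n ≠ ⊥ := by
  induction n using EReal.rec with
  | bot => exact absurd rfl hn
  | coe r => rw [← EReal.coe_mul]; exact EReal.coe_ne_bot _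
  | top => rw [EReal.coe_mul_top_of_pos hb]; exact bot_lt_top.ne'

lemma epos_key {x : EReal} (hx : x ≠ ⊥) : (epos x : EReal) = x + (epos (-x) : EReal) := by
  induction x using EReal.rec with
  | bot => exact absurd rfl hx
  | coe r =>
      rw [← EReal.coe_neg, epos_coe, epos_coe, EReal.coe_ennreal_ofReal, EReal.coe_ennreal_ofReal]
      rcases le_total r 0 with h | h
      · rw [max_eq_right h, max_eq_left (by linarith), ← EReal.coe_add]; norm_num
      · rw [max_eq_left h, max_eq_right (by linarith), ← EReal.coe_add]; norm_num
  | top =>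
      rw [EReal.neg_top, epos_bot]
      simp [epos]

lemma coe_mul_add {a : ℝ} (ha : 0 ≤ a) (x y : EReal) :
    (a : EReal) * (x + y) = (a : EReal) * x + (a : EReal) * y := by
  rcases eq_or_lt_of_le ha with rfl | ha
  · simp
  · induction x using EReal.rec with
    | bot => simp [EReal.bot_add, EReal.coe_mul_bot_of_pos ha]
    | top =>
        induction y using EReal.rec with
        | bot => simp [EReal.add_bot, EReal.coe_mul_bot_of_pos ha, EReal.coe_mul_top_of_pos ha]
        | coe s =>
            rw [EReal.top_add_of_ne_bot (EReal.coe_ne_bot s), EReal.coe_mul_top_of_pos ha,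
              ← EReal.coe_mul, EReal.top_add_of_ne_bot (EReal.coe_ne_bot _)]
        | top => simp [EReal.coe_mul_top_of_pos ha]
    | coe r =>
        induction y using EReal.rec with
        | bot => simp [EReal.add_bot, EReal.coe_mul_bot_of_pos ha, ← EReal.coe_mul]
        | coe s => rw [← EReal.coe_add, ← EReal.coe_mul, ← EReal.coe_mul, ← EReal.coe_mul,
            ← EReal.coe_add, mul_add]
        | top =>
            rw [EReal.add_top_of_ne_bot (EReal.coe_ne_bot r), EReal.coe_mul_top_of_pos ha,
              ← EReal.coe_mul, EReal.add_top_of_ne_bot (EReal.coe_ne_bot _)]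

lemma epos_combo {a b : ℝ} (ha : 0 ≤ a) (hb : 0 ≤ b) {w z₁ z₂ : EReal}
    (hw : w ≠ ⊥) (hz₁ : z₁ ≠ ⊥) (hz₂ : z₂ ≠ ⊥)
    (h : w ≤ (a : EReal) * z₁ + (b : EReal) * z₂) :
    epos w + ENNReal.ofReal a * epos (-z₁) + ENNReal.ofReal b * epos (-z₂)
      ≤ ENNReal.ofReal a * epos z₁ + ENNReal.ofReal b * epos z₂ + epos (-w) := by
  have hca : ((ENNReal.ofReal a : ℝ≥0∞) : EReal) = (a : EReal) := by
    rw [EReal.coe_ennreal_ofReal, max_eq_left ha]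
  have hcb : ((ENNReal.ofReal b : ℝ≥0∞) : EReal) = (b : EReal) := by
    rw [EReal.coe_ennreal_ofReal, max_eq_left hb]
  rw [← EReal.coe_ennreal_le_coe_ennreal_iff]
  rw [EReal.coe_ennreal_add, EReal.coe_ennreal_add, EReal.coe_ennreal_add, EReal.coe_ennreal_add,
    EReal.coe_ennreal_mul, EReal.coe_ennreal_mul, EReal.coe_ennreal_mul, EReal.coe_ennreal_mul,
    hca, hcb, epos_key hw, epos_key hz₁, epos_key hz₂, coe_mul_add ha, coe_mul_add hb]
  have key : w + ((a : EReal) * (epos (-z₁) : EReal) + (b : EReal) * (epos (-z₂) : EReal)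
        + (epos (-w) : EReal))
      ≤ ((a : EReal) * z₁ + (b : EReal) * z₂)
        + ((a : EReal) * (epos (-z₁) : EReal) + (b : EReal) * (epos (-z₂) : EReal)
        + (epos (-w) : EReal)) := add_le_add_left h _
  refine le_trans (le_of_eq ?_) (le_trans key (le_of_eq ?_)) <;>
    simp only [add_assoc, add_comm, add_left_comm]

lemma MeasureTheory.Integrable.add_const'' {Ω : Type*} [MeasurableSpace Ω] {μ : Measure Ω}
    [IsFiniteMeasure μ] {U : Ω → ℝ} (hU : Integrable U μ) (c : ℝ) :
    Integrable (fun ω => U ω + c) μ := by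
  simpa using hU.add (integrable_const c)

section meas
variable {Ω : Type*} [MeasurableSpace Ω] {μ : Measure Ω} [IsProbabilityMeasure μ]

omit [IsProbabilityMeasure μ] in
lemma expE_mono {f g : Ω → EReal} (h : ∀ᵐ ω ∂μ, f ω ≤ g ω) : expE μ f ≤ expE μ g := by
  refine EReal.sub_le_sub ?_ ?_
  · exact EReal.coe_ennreal_le_coe_ennreal_iff.mpr
      (lintegral_mono_ae (h.mono fun ω hω => epos_mono hω))
  · exact EReal.coe_ennreal_le_coe_ennreal_iff.mpr
      (lintegral_mono_ae (h.mono fun ω hω => epos_mono (EReal.neg_le_neg_iff.mpr hω)))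

omit [IsProbabilityMeasure μ] in
lemma expE_coe (f : Ω → ℝ) (hf : Integrable f μ) :
    expE μ (fun ω => (f ω : EReal)) = ((∫ ω, f ω ∂μ : ℝ) : EReal) := by
  have h1 : (fun ω => epos ((f ω : EReal))) = fun ω => ENNReal.ofReal (f ω) := by
    funext ω; exact epos_coe _
  have h2 : (fun ω => epos (-(f ω : EReal))) = fun ω => ENNReal.ofReal (-(f ω)) := by
    funext ω; rw [← EReal.coe_neg, epos_coe]
  have hb : ∀ ω, ENNReal.ofReal (f ω) ≤ (‖f ω‖₊ : ℝ≥0∞) := by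
    intro ω; rw [← enorm_eq_nnnorm, Real.enorm_eq_ofReal_abs]; exact ENNReal.ofReal_le_ofReal (le_abs_self _)
  have hb' : ∀ ω, ENNReal.ofReal (-(f ω)) ≤ (‖f ω‖₊ : ℝ≥0∞) := by
    intro ω; rw [← enorm_eq_nnnorm, Real.enorm_eq_ofReal_abs]; exact ENNReal.ofReal_le_ofReal (neg_le_abs _)
  have hP : ∫⁻ ω, ENNReal.ofReal (f ω) ∂μ ≠ ⊤ :=
    ((lintegral_mono hb).trans_lt hf.hasFiniteIntegral).ne
  have hN : ∫⁻ ω, ENNReal.ofReal (-(f ω)) ∂μ ≠ ⊤ :=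
    ((lintegral_mono hb').trans_lt hf.hasFiniteIntegral).ne
  rw [expE, h1, h2, coe_ennreal_fin hP, coe_ennreal_fin hN, ← EReal.coe_sub,
    integral_eq_lintegral_pos_part_sub_lintegral_neg_part hf]

omit [IsProbabilityMeasure μ] in
lemma negpart_fin {v : ℝ → EReal} (v_ge : ∀ y : ℝ, ((-y : ℝ) : EReal) ≤ v y)
    {U : Ω → ℝ} (hU : Integrable U μ) : ∫⁻ ω, epos (-(v (U ω))) ∂μ ≠ ⊤ := by
  have hb : ∀ ω, epos (-(v (U ω))) ≤ (‖U ω‖₊ : ℝ≥0∞) := by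
    intro ω
    have h1 : -(v (U ω)) ≤ ((U ω : ℝ) : EReal) := by
      rw [← neg_neg ((U ω : ℝ) : EReal), EReal.neg_le_neg_iff, ← EReal.coe_neg]
      exact v_ge _
    refine le_trans (epos_mono h1) ?_
    rw [epos_coe, ← enorm_eq_nnnorm, Real.enorm_eq_ofReal_abs]
    exact ENNReal.ofReal_le_ofReal (le_abs_self _)
  exact ((lintegral_mono hb).trans_lt hU.hasFiniteIntegral).ne

omit [IsProbabilityMeasure μ] in
lemma expE_lb {v : ℝ → EReal} (v_ge : ∀ y : ℝ, ((-y : ℝ) : EReal) ≤ v y)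
    {U : Ω → ℝ} (hU : Integrable U μ) :
    ((-(∫ ω, U ω ∂μ) : ℝ) : EReal) ≤ expE μ (fun ω => v (U ω)) := by
  have h1 : expE μ (fun ω => ((-(U ω) : ℝ) : EReal)) ≤ expE μ (fun ω => v (U ω)) :=
    expE_mono (Filter.Eventually.of_forall fun ω => v_ge (U ω))
  have h2 : expE μ (fun ω => ((-(U ω) : ℝ) : EReal))
      = ((∫ ω, (-(U ω)) ∂μ : ℝ) : EReal) := expE_coe (fun ω => -(U ω)) hU.neg
  rw [h2, integral_neg] at h1
  exact h1

lemma rho_lb {v : ℝ → EReal} (v_ge : ∀ y : ℝ, ((-y : ℝ) : EReal) ≤ v y)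
    {U : Ω → ℝ} (hU : Integrable U μ) :
    ((-(∫ ω, U ω ∂μ) : ℝ) : EReal) ≤ rho μ v U := by
  refine le_iInf fun l => ?_
  have h1 := expE_lb v_ge (hU.add_const'' l)
  have h2 : ∫ ω, (U ω + l) ∂μ = (∫ ω, U ω ∂μ) + l := by
    rw [integral_add hU (integrable_const l), integral_const, probReal_univ,
      one_smul]
  calc ((-(∫ ω, U ω ∂μ) : ℝ) : EReal)
      = (l : EReal) + ((-(∫ ω, (U ω + l) ∂μ) : ℝ) : EReal) := by
        rw [← EReal.coe_add, h2]; norm_num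
    _ ≤ (l : EReal) + expE μ (fun ω => v (U ω + l)) := add_le_add_right h1 _

end meas

/-- the OCE-type risk measure `ρ_v` is convex and monotone on `Lᵖ`. -/
theorem stmt13 {Ω : Type*} [MeasurableSpace Ω] (μ : Measure Ω) [IsProbabilityMeasure μ]
    (v : ℝ → EReal) (hproper : ∃ t, v t ≠ ⊤) (hnotbot : ∀ t, v t ≠ ⊥)
    (hconv : ERealConvexOn v) (hlsc : LowerSemicontinuous v)
    (hmono : ∀ s t : ℝ, s ≤ t → v t ≤ v s) (h0 : v 0 = 0)
    (hsub : ∀ y : ℝ, v y - v 0 ≥ (((-1 : ℝ) * (y - 0) : ℝ) : EReal))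
    (p : ENNReal) (hp : 1 ≤ p) :
    (∀ X Y : Ω → ℝ, MemLp X p μ → MemLp Y p μ → ∀ a b : ℝ, 0 ≤ a → 0 ≤ b → a + b = 1 →
        rho μ v (fun ω => a * X ω + b * Y ω) ≤ (a : EReal) * rho μ v X + (b : EReal) * rho μ v Y) ∧
    (∀ X Y : Ω → ℝ, MemLp X p μ → MemLp Y p μ → (∀ᵐ ω ∂μ, Y ω ≤ X ω) →
        rho μ v X ≤ rho μ v Y) := by
  have hvm : Measurable v := hlsc.measurable
  have v_ge : ∀ y : ℝ, ((-y : ℝ) : EReal) ≤ v y := by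
    intro y
    have h := hsub y
    rw [h0] at h
    have h' : v y - 0 = v y := by
      rw [sub_eq_add_neg, neg_zero, add_zero]
    rw [h'] at h
    calc ((-y : ℝ) : EReal) = (((-1 : ℝ) * (y - 0) : ℝ) : EReal) := by norm_num
      _ ≤ v y := h
  constructor
  · -- convexity
    intro X Y hX hY a b ha hb hab
    have iX : Integrable X μ := hX.integrable hp
    have iY : Integrable Y μ := hY.integrable hp
    rcases eq_or_lt_of_le ha with rfl | ha'
    · have hb1 : b = 1 := by linarith
      subst hb1
      have hfun : (fun ω => (0 : ℝ) * X ω + 1 * Y ω) = Y := by funext ω; ring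
      rw [hfun, EReal.coe_zero, EReal.coe_one, zero_mul, one_mul, zero_add]
    rcases eq_or_lt_of_le hb with rfl | hb'
    · have ha1 : a = 1 := by linarith
      subst ha1
      have hfun : (fun ω => (1 : ℝ) * X ω + 0 * Y ω) = X := by funext ω; ring
      rw [hfun, EReal.coe_zero, EReal.coe_one, zero_mul, one_mul, add_zero]
    -- now 0 < a, 0 < b
    have hm_bot : rho μ v X ≠ ⊥ :=
      ((EReal.bot_lt_coe _).trans_le (rho_lb v_ge iX)).ne'
    have hn_bot : rho μ v Y ≠ ⊥ :=
      ((EReal.bot_lt_coe _).trans_le (rho_lb v_ge iY)).ne'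
    refine EReal.le_of_forall_lt_iff_le.mp (fun z hz => ?_)
    have hm_top : rho μ v X ≠ ⊤ := by
      intro h
      rw [h, EReal.coe_mul_top_of_pos ha', EReal.top_add_of_ne_bot (mul_ne_bot' hb' hn_bot)] at hz
      exact not_top_lt hz
    have hn_top : rho μ v Y ≠ ⊤ := by
      intro h
      rw [h, EReal.coe_mul_top_of_pos hb', EReal.add_top_of_ne_bot (mul_ne_bot' ha' hm_bot)] at hz
      exact not_top_lt hz
    set mr := (rho μ v X).toReal with hmr_def
    set nr := (rho μ v Y).toReal with hnr_def
    have hmr : ((mr : ℝ) : EReal) = rho μ v X := EReal.coe_toReal hm_top hm_bot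
    have hnr : ((nr : ℝ) : EReal) = rho μ v Y := EReal.coe_toReal hn_top hn_bot
    have hz' : a * mr + b * nr < z := by
      rw [← hmr, ← hnr, ← EReal.coe_mul, ← EReal.coe_mul, ← EReal.coe_add] at hz
      exact_mod_cast hz
    set ε := z - (a * mr + b * nr) with hε_def
    have hε : 0 < ε := by simp [hε_def]; linarith
    -- choose l₁
    obtain ⟨l₁, hl₁⟩ := iInf_lt_iff.mp (show rho μ v X < ((mr + ε : ℝ) : EReal) by
      rw [← hmr]; exact_mod_cast lt_add_of_pos_right mr hε)
    obtain ⟨l₂, hl₂⟩ := iInf_lt_iff.mp (show rho μ v Y < ((nr + ε : ℝ) : EReal) by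
      rw [← hnr]; exact_mod_cast lt_add_of_pos_right nr hε)
    have hE₁bot : expE μ (fun ω => v (X ω + l₁)) ≠ ⊥ :=
      ((EReal.bot_lt_coe _).trans_le (expE_lb v_ge (iX.add_const'' l₁))).ne'
    have hE₂bot : expE μ (fun ω => v (Y ω + l₂)) ≠ ⊥ :=
      ((EReal.bot_lt_coe _).trans_le (expE_lb v_ge (iY.add_const'' l₂))).ne'
    have hE₁top : expE μ (fun ω => v (X ω + l₁)) ≠ ⊤ := by
      intro h
      rw [h, EReal.add_top_of_ne_bot (EReal.coe_ne_bot l₁)] at hl₁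
      exact not_top_lt hl₁
    have hE₂top : expE μ (fun ω => v (Y ω + l₂)) ≠ ⊤ := by
      intro h
      rw [h, EReal.add_top_of_ne_bot (EReal.coe_ne_bot l₂)] at hl₂
      exact not_top_lt hl₂
    set e₁ := (expE μ (fun ω => v (X ω + l₁))).toReal with he₁_def
    set e₂ := (expE μ (fun ω => v (Y ω + l₂))).toReal with he₂_def
    have he₁ : ((e₁ : ℝ) : EReal) = expE μ (fun ω => v (X ω + l₁)) :=
      EReal.coe_toReal hE₁top hE₁bot
    have he₂ : ((e₂ : ℝ) : EReal) = expE μ (fun ω => v (Y ω + l₂)) :=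
      EReal.coe_toReal hE₂top hE₂bot
    have hle₁ : l₁ + e₁ < mr + ε := by
      rw [← he₁, ← EReal.coe_add] at hl₁
      exact_mod_cast hl₁
    have hle₂ : l₂ + e₂ < nr + ε := by
      rw [← he₂, ← EReal.coe_add] at hl₂
      exact_mod_cast hl₂
    set l := a * l₁ + b * l₂ with hl_def
    -- the key bound on expE
    have hW : expE μ (fun ω => v (a * X ω + b * Y ω + l))
        ≤ ((a * e₁ + b * e₂ : ℝ) : EReal) := by
      -- notation
      set PW := ∫⁻ ω, epos (v (a * X ω + b * Y ω + l)) ∂μ with hPW_def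
      set NW := ∫⁻ ω, epos (-(v (a * X ω + b * Y ω + l))) ∂μ with hNW_def
      set P₁ := ∫⁻ ω, epos (v (X ω + l₁)) ∂μ with hP₁_def
      set N₁ := ∫⁻ ω, epos (-(v (X ω + l₁))) ∂μ with hN₁_def
      set P₂ := ∫⁻ ω, epos (v (Y ω + l₂)) ∂μ with hP₂_def
      set N₂ := ∫⁻ ω, epos (-(v (Y ω + l₂))) ∂μ with hN₂_def
      have iU : Integrable (fun ω => a * X ω + b * Y ω + l) μ :=
        ((iX.const_mul a).add (iY.const_mul b)).add_const'' l
      have hNW : NW ≠ ⊤ := negpart_fin v_ge iU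
      have hN₁ : N₁ ≠ ⊤ := negpart_fin v_ge (iX.add_const'' l₁)
      have hN₂ : N₂ ≠ ⊤ := negpart_fin v_ge (iY.add_const'' l₂)
      have hE₁eq : expE μ (fun ω => v (X ω + l₁)) = ((P₁ : EReal) - (N₁ : EReal)) := rfl
      have hE₂eq : expE μ (fun ω => v (Y ω + l₂)) = ((P₂ : EReal) - (N₂ : EReal)) := rfl
      have hP₁ : P₁ ≠ ⊤ := by
        intro h
        apply hE₁top
        rw [hE₁eq, h, EReal.coe_ennreal_top, coe_ennreal_fin hN₁, EReal.top_sub_coe]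
      have hP₂ : P₂ ≠ ⊤ := by
        intro h
        apply hE₂top
        rw [hE₂eq, h, EReal.coe_ennreal_top, coe_ennreal_fin hN₂, EReal.top_sub_coe]
      -- ae-measurability
      have hXm : AEMeasurable (fun ω => X ω + l₁) μ :=
        hX.aestronglyMeasurable.aemeasurable.add aemeasurable_const
      have hYm : AEMeasurable (fun ω => Y ω + l₂) μ :=
        hY.aestronglyMeasurable.aemeasurable.add aemeasurable_const
      have hUm : AEMeasurable (fun ω => a * X ω + b * Y ω + l) μ :=
        iU.aestronglyMeasurable.aemeasurable
      have hvneg : Measurable fun x : ℝ => epos (-(v x)) :=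
        (measurable_epos.comp (continuous_neg.measurable)).comp hvm
      have hvpos : Measurable fun x : ℝ => epos (v x) := measurable_epos.comp hvm
      have gUm : AEMeasurable (fun ω => epos (v (a * X ω + b * Y ω + l))) μ :=
        hvpos.comp_aemeasurable hUm
      have g1m : AEMeasurable (fun ω => epos (v (X ω + l₁))) μ :=
        hvpos.comp_aemeasurable hXm
      have g2m : AEMeasurable (fun ω => epos (v (Y ω + l₂))) μ :=
        hvpos.comp_aemeasurable hYm
      have g1m' : AEMeasurable (fun ω => epos (-(v (X ω + l₁)))) μ :=
        hvneg.comp_aemeasurable hXm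
      have g2m' : AEMeasurable (fun ω => epos (-(v (Y ω + l₂)))) μ :=
        hvneg.comp_aemeasurable hYm
      -- pointwise inequality
      have hpt : ∀ ω, epos (v (a * X ω + b * Y ω + l))
            + ENNReal.ofReal a * epos (-(v (X ω + l₁)))
            + ENNReal.ofReal b * epos (-(v (Y ω + l₂)))
          ≤ ENNReal.ofReal a * epos (v (X ω + l₁))
            + ENNReal.ofReal b * epos (v (Y ω + l₂))
            + epos (-(v (a * X ω + b * Y ω + l))) := by
        intro ω
        have harg : a * X ω + b * Y ω + l = a * (X ω + l₁) + b * (Y ω + l₂) := by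
          rw [hl_def]; ring
        have hcv : v (a * X ω + b * Y ω + l)
            ≤ (a : EReal) * v (X ω + l₁) + (b : EReal) * v (Y ω + l₂) := by
          rw [harg]; exact hconv _ _ a b ha hb hab
        exact epos_combo ha hb (hnotbot _) (hnotbot _) (hnotbot _) hcv
      -- integrate
      have hInt : PW + ENNReal.ofReal a * N₁ + ENNReal.ofReal b * N₂
          ≤ ENNReal.ofReal a * P₁ + ENNReal.ofReal b * P₂ + NW := by
        have eq1 : ∫⁻ ω, (epos (v (a * X ω + b * Y ω + l))
              + ENNReal.ofReal a * epos (-(v (X ω + l₁)))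
              + ENNReal.ofReal b * epos (-(v (Y ω + l₂)))) ∂μ
            = PW + ENNReal.ofReal a * N₁ + ENNReal.ofReal b * N₂ := by
          rw [lintegral_add_left' (f := fun ω => epos (v (a * X ω + b * Y ω + l))
              + ENNReal.ofReal a * epos (-(v (X ω + l₁)))) (gUm.add (g1m'.const_mul _)),
            lintegral_add_left' gUm,
            lintegral_const_mul' _ _ ENNReal.ofReal_ne_top,
            lintegral_const_mul' _ _ ENNReal.ofReal_ne_top]
        have eq2 : ∫⁻ ω, (ENNReal.ofReal a * epos (v (X ω + l₁))
              + ENNReal.ofReal b * epos (v (Y ω + l₂))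
              + epos (-(v (a * X ω + b * Y ω + l)))) ∂μ
            = ENNReal.ofReal a * P₁ + ENNReal.ofReal b * P₂ + NW := by
          rw [lintegral_add_left' (f := fun ω => ENNReal.ofReal a * epos (v (X ω + l₁))
              + ENNReal.ofReal b * epos (v (Y ω + l₂))) ((g1m.const_mul _).add (g2m.const_mul _)),
            lintegral_add_left' (g1m.const_mul _),
            lintegral_const_mul' _ _ ENNReal.ofReal_ne_top,
            lintegral_const_mul' _ _ ENNReal.ofReal_ne_top]
        rw [← eq1, ← eq2]
        exact lintegral_mono hpt
      have hRfin : ENNReal.ofReal a * P₁ + ENNReal.ofReal b * P₂ + NW ≠ ⊤ :=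
        ENNReal.add_ne_top.mpr ⟨ENNReal.add_ne_top.mpr
          ⟨ENNReal.mul_ne_top ENNReal.ofReal_ne_top hP₁,
           ENNReal.mul_ne_top ENNReal.ofReal_ne_top hP₂⟩, hNW⟩
      have hPW : PW ≠ ⊤ := by
        intro h
        exact hRfin (top_le_iff.mp ((by simp [h] : (⊤ : ℝ≥0∞)
          ≤ PW + ENNReal.ofReal a * N₁ + ENNReal.ofReal b * N₂).trans hInt))
      -- convert to reals
      have hIntr : PW.toReal + a * N₁.toReal + b * N₂.toReal
          ≤ a * P₁.toReal + b * P₂.toReal + NW.toReal := by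
        have h1 := ENNReal.toReal_mono hRfin hInt
        rw [ENNReal.toReal_add (ENNReal.add_ne_top.mpr
              ⟨hPW, ENNReal.mul_ne_top ENNReal.ofReal_ne_top hN₁⟩)
              (ENNReal.mul_ne_top ENNReal.ofReal_ne_top hN₂),
            ENNReal.toReal_add hPW (ENNReal.mul_ne_top ENNReal.ofReal_ne_top hN₁),
            ENNReal.toReal_add (ENNReal.add_ne_top.mpr
              ⟨ENNReal.mul_ne_top ENNReal.ofReal_ne_top hP₁,
               ENNReal.mul_ne_top ENNReal.ofReal_ne_top hP₂⟩) hNW,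
            ENNReal.toReal_add (ENNReal.mul_ne_top ENNReal.ofReal_ne_top hP₁)
              (ENNReal.mul_ne_top ENNReal.ofReal_ne_top hP₂),
            ENNReal.toReal_mul, ENNReal.toReal_mul, ENNReal.toReal_mul, ENNReal.toReal_mul,
            ENNReal.toReal_ofReal ha, ENNReal.toReal_ofReal hb] at h1
        exact h1
      have he₁r : e₁ = P₁.toReal - N₁.toReal := by
        rw [he₁_def, hE₁eq, EReal.toReal_sub, EReal.toReal_coe_ennreal,
          EReal.toReal_coe_ennreal]
        · rw [Ne, EReal.coe_ennreal_eq_top_iff]; exact hP₁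
        · exact EReal.coe_ennreal_ne_bot _
        · rw [Ne, EReal.coe_ennreal_eq_top_iff]; exact hN₁
        · exact EReal.coe_ennreal_ne_bot _
      have he₂r : e₂ = P₂.toReal - N₂.toReal := by
        rw [he₂_def, hE₂eq, EReal.toReal_sub, EReal.toReal_coe_ennreal,
          EReal.toReal_coe_ennreal]
        · rw [Ne, EReal.coe_ennreal_eq_top_iff]; exact hP₂
        · exact EReal.coe_ennreal_ne_bot _
        · rw [Ne, EReal.coe_ennreal_eq_top_iff]; exact hN₂
        · exact EReal.coe_ennreal_ne_bot _
      have hWeq : expE μ (fun ω => v (a * X ω + b * Y ω + l))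
          = ((PW.toReal - NW.toReal : ℝ) : EReal) := by
        show (PW : EReal) - (NW : EReal) = _
        rw [coe_ennreal_fin hPW, coe_ennreal_fin hNW, ← EReal.coe_sub]
      rw [hWeq, EReal.coe_le_coe_iff]
      have ha1 : a * e₁ = a * P₁.toReal - a * N₁.toReal := by rw [he₁r]; ring
      have hb1 : b * e₂ = b * P₂.toReal - b * N₂.toReal := by rw [he₂r]; ring
      linarith
    -- conclude
    calc rho μ v (fun ω => a * X ω + b * Y ω)
        ≤ (l : EReal) + expE μ (fun ω => v (a * X ω + b * Y ω + l)) := iInf_le _ l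
      _ ≤ (l : EReal) + ((a * e₁ + b * e₂ : ℝ) : EReal) := add_le_add_right hW _
      _ = ((l + (a * e₁ + b * e₂) : ℝ) : EReal) := by rw [hl_def]; norm_cast
      _ ≤ (z : EReal) := by
          rw [EReal.coe_le_coe_iff]
          have h1 : a * l₁ + a * e₁ ≤ a * mr + a * ε := by
            rw [← mul_add, ← mul_add]; exact mul_le_mul_of_nonneg_left hle₁.le ha
          have h2 : b * l₂ + b * e₂ ≤ b * nr + b * ε := by
            rw [← mul_add, ← mul_add]; exact mul_le_mul_of_nonneg_left hle₂.le hb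
          have h3 : a * ε + b * ε = ε := by rw [← add_mul, hab, one_mul]
          have h4 : l = a * l₁ + b * l₂ := hl_def
          have h5 : ε = z - (a * mr + b * nr) := hε_def
          linarith
  · -- monotonicity
    intro X Y hX hY hle
    refine iInf_mono fun l => add_le_add_right (expE_mono ?_) _
    exact hle.mono fun ω h => hmono (Y ω + l) (X ω + l) (by linarith)
end

section
/- Let C be a nonempty convex subset of a separated locally convex space 𝒳 and x ∈ C. Then x belongs to the quasi interior of C (i.e., the closure of cone(C - x) equals 𝒳) if and only if the normal cone N_C(x) = {x* ∈ 𝒳* : ⟨x*, y - x⟩ ≤ 0 for all y ∈ C} equals {0}. -/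
/-- a point `x` of a nonempty convex set `C` in a Hausdorff locally
convex space belongs to the quasi interior of `C` (i.e. `cl cone(C - x) = 𝒳`) iff
the normal cone of `C` at `x` is trivial. -/
theorem stmt19 {X : Type*} [AddCommGroup X] [Module ℝ X] [TopologicalSpace X]
    [IsTopologicalAddGroup X] [ContinuousSMul ℝ X] [LocallyConvexSpace ℝ X] [T2Space X]
    (C : Set X) (hC : Convex ℝ C) (hne : C.Nonempty) (x : X) (hx : x ∈ C) :
    closure {z : X | ∃ (l : ℝ) (y : X), 0 ≤ l ∧ y ∈ C ∧ z = l • (y - x)} = Set.univ ↔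
      {xstar : X →L[ℝ] ℝ | ∀ y ∈ C, xstar (y - x) ≤ 0} = {0} := by
  set K : Set X := {z : X | ∃ (l : ℝ) (y : X), 0 ≤ l ∧ y ∈ C ∧ z = l • (y - x)} with hK
  have h0K : (0 : X) ∈ K := ⟨0, x, le_refl 0, hx, by simp⟩
  have hKconv : Convex ℝ K := by
    rintro z1 ⟨l1, y1, hl1, hy1, rfl⟩ z2 ⟨l2, y2, hl2, hy2, rfl⟩ a b ha hb hab
    rcases eq_or_lt_of_le (by positivity : (0:ℝ) ≤ a * l1 + b * l2) with h | h
    · have h1 : a * l1 = 0 := by nlinarith [mul_nonneg ha hl1, mul_nonneg hb hl2]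
      have h2 : b * l2 = 0 := by nlinarith [mul_nonneg ha hl1, mul_nonneg hb hl2]
      refine ⟨0, x, le_refl 0, hx, ?_⟩
      rw [smul_smul, smul_smul, h1, h2]; simp
    · set l : ℝ := a * l1 + b * l2 with hl
      refine ⟨l, ((a * l1) / l) • y1 + ((b * l2) / l) • y2, le_of_lt h,
        hC hy1 hy2 (by positivity) (by positivity) (by field_simp; exact hl.symm), ?_⟩
      have hlne : l ≠ 0 := ne_of_gt h
      rw [smul_smul, smul_smul]
      rw [smul_sub, smul_sub, smul_sub, smul_add, smul_smul, smul_smul]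
      field_simp
      module
  constructor
  · intro hcl
    ext f
    simp only [Set.mem_setOf_eq, Set.mem_singleton_iff]
    constructor
    · intro hf
      have hle : ∀ z : X, f z ≤ 0 := by
        intro z
        have hzK : z ∈ closure K := by rw [hcl]; trivial
        have hsub : closure K ⊆ {w : X | f w ≤ 0} := by
          apply closure_minimal
          · rintro w ⟨l, y, hl, hy, rfl⟩
            simp only [Set.mem_setOf_eq, map_smul, smul_eq_mul]
            exact mul_nonpos_of_nonneg_of_nonpos hl (hf y hy)
          · exact isClosed_le f.continuous continuous_const
        exact hsub hzK
      ext z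
      have h1 := hle z
      have h2 := hle (-z)
      simp only [map_neg] at h2
      have : f z = 0 := le_antisymm h1 (by linarith)
      simpa using this
    · rintro rfl y _; simp
  · intro hN
    ext z
    simp only [Set.mem_univ, iff_true]
    by_contra hz
    obtain ⟨f, u, hfu, huz⟩ := geometric_hahn_banach_closed_point
      (hKconv.closure) isClosed_closure hz
    have hu0 : 0 < u := by
      have := hfu 0 (subset_closure h0K)
      simpa using this
    have hfnc : f ∈ {xstar : X →L[ℝ] ℝ | ∀ y ∈ C, xstar (y - x) ≤ 0} := by
      intro y hy
      by_contra hpos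
      push_neg at hpos
      -- take l large: l * f(y-x) < u for all l ≥ 0, contradiction
      set l : ℝ := (u + 1) / f (y - x) with hldef
      have hl0 : 0 ≤ l := le_of_lt (div_pos (by linarith) hpos)
      have := hfu (l • (y - x)) (subset_closure ⟨l, y, hl0, hy, rfl⟩)
      rw [map_smul, smul_eq_mul, hldef, div_mul_cancel₀ _ (ne_of_gt hpos)] at this
      linarith
    rw [hN] at hfnc
    simp only [Set.mem_singleton_iff] at hfnc
    rw [hfnc] at huz
    simp at huz
    linarith
end
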